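/- For all real θ, φ and real numbers a, b, and nonnegative integers i, j, the product (a·cos θ + b·cos φ)^i · (a·sin θ + b·sin φ)^j can be written as a finite real linear combination of functions of the form cos(r·θ + σ·s·φ + ψ), where r, s are nonnegative integers with r + s ≤ i + j, σ ∈ {−1, 1}, and ψ ∈ {0, π/2}, plus a constant term. -/

import Mathlib

open Real

namespace KempeAux

abbrev Term := ℂ × ℤ × ℤ

noncomputable def tval (t : Term) (θ φ : ℝ) : ℂ :=
  t.1 * Complex.exp ((((t.2.1 : ℝ) * θ + (t.2.2 : ℝ) * φ : ℝ) : ℂ) * Complex.I)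

noncomputable def evalL (L : List Term) (θ φ : ℝ) : ℂ :=
  (L.map (fun t => tval t θ φ)).sum

def degOK (n : ℕ) (t : Term) : Prop := t.2.1.natAbs + t.2.2.natAbs ≤ n

def mulT (t u : Term) : Term := (t.1 * u.1, t.2.1 + u.2.1, t.2.2 + u.2.2)

def mulL (L M : List Term) : List Term := L.flatMap fun t => M.map (mulT t)

lemma tval_mul (t u : Term) (θ φ : ℝ) :
    tval (mulT t u) θ φ = tval t θ φ * tval u θ φ := by
  simp only [tval, mulT]
  rw [show ((((t.2.1 + u.2.1 : ℤ) : ℝ) * θ + ((t.2.2 + u.2.2 : ℤ) : ℝ) * φ : ℝ) : ℂ)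
      * Complex.I =
      (((t.2.1 : ℝ) * θ + (t.2.2 : ℝ) * φ : ℝ) : ℂ) * Complex.I +
      (((u.2.1 : ℝ) * θ + (u.2.2 : ℝ) * φ : ℝ) : ℂ) * Complex.I by push_cast; ring]
  rw [Complex.exp_add]; ring

lemma evalL_mul (L M : List Term) (θ φ : ℝ) :
    evalL (mulL L M) θ φ = evalL L θ φ * evalL M θ φ := by
  induction L with
  | nil => simp [evalL, mulL]
  | cons t L ih =>
      simp only [mulL, List.flatMap_cons] at *
      simp only [evalL, List.map_append, List.sum_append, List.map_cons, List.sum_cons] at *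
      rw [ih, add_mul]
      congr 1
      rw [List.map_map]
      have : (fun u => tval (mulT t u) θ φ) = fun u => tval t θ φ * tval u θ φ := by
        funext u; exact tval_mul t u θ φ
      simp only [Function.comp_def, tval_mul]
      rw [← List.sum_map_mul_left]

lemma degOK_mul {n k : ℕ} {L M : List Term} (hL : ∀ t ∈ L, degOK n t)
    (hM : ∀ t ∈ M, degOK k t) : ∀ t ∈ mulL L M, degOK (n + k) t := by
  intro t ht
  simp only [mulL, List.mem_flatMap, List.mem_map] at ht
  obtain ⟨u, hu, v, hv, rfl⟩ := ht
  have h1 := hL u hu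
  have h2 := hM v hv
  obtain ⟨cu, pu, qu⟩ := u
  obtain ⟨cv, pv, qv⟩ := v
  simp only [degOK, mulT] at *
  have a1 := Int.natAbs_add_le pu pv
  have a2 := Int.natAbs_add_le qu qv
  omega

lemma exp_neg_I (x : ℝ) :
    Complex.exp (-(Complex.I * (x : ℂ))) = Complex.cos x - Complex.sin x * Complex.I := by
  rw [show -(Complex.I * (x : ℂ)) = ((-x : ℝ) : ℂ) * Complex.I by push_cast; ring,
    Complex.exp_mul_I]
  simp
  ring

lemma exp_neg_I' (x : ℝ) :
    Complex.exp (-((x : ℂ) * Complex.I)) = Complex.cos x - Complex.sin x * Complex.I := by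
  rw [show -((x : ℂ) * Complex.I) = -(Complex.I * (x : ℂ)) by ring]
  exact exp_neg_I x

def Rep (n : ℕ) (f : ℝ → ℝ → ℂ) : Prop :=
  ∃ L : List Term, (∀ t ∈ L, degOK n t) ∧ ∀ θ φ, f θ φ = evalL L θ φ

lemma Rep.mul {n k f g} (hf : Rep n f) (hg : Rep k g) :
    Rep (n + k) (fun θ φ => f θ φ * g θ φ) := by
  obtain ⟨L, hL, hLe⟩ := hf
  obtain ⟨M, hM, hMe⟩ := hg
  exact ⟨mulL L M, degOK_mul hL hM, fun θ φ => by simp only []; rw [hLe, hMe, evalL_mul]⟩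

lemma Rep.one : Rep 0 (fun _ _ => (1 : ℂ)) := by
  refine ⟨[(1, 0, 0)], ?_, ?_⟩
  · intro t ht; simp at ht; subst ht; simp [degOK]
  · intro θ φ; simp [evalL, tval]

lemma Rep.pow {f} (hf : Rep 1 f) (n : ℕ) : Rep n (fun θ φ => f θ φ ^ n) := by
  induction n with
  | zero => simpa using Rep.one
  | succ n ih =>
      have := ih.mul hf
      simpa [pow_succ] using this

lemma rep_x (a b : ℝ) :
    Rep 1 (fun θ φ => ((a * Real.cos θ + b * Real.cos φ : ℝ) : ℂ)) := by
  refine ⟨[((a/2 : ℝ), 1, 0), ((a/2 : ℝ), -1, 0), ((b/2 : ℝ), 0, 1), ((b/2 : ℝ), 0, -1)],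
    ?_, ?_⟩
  · intro t ht; fin_cases ht <;> simp [degOK]
  · intro θ φ
    simp only [evalL, tval, List.map_cons, List.map_nil, List.sum_cons, List.sum_nil]
    push_cast
    simp [Complex.exp_mul_I]
    rw [exp_neg_I', exp_neg_I']
    ring

lemma rep_y (a b : ℝ) :
    Rep 1 (fun θ φ => ((a * Real.sin θ + b * Real.sin φ : ℝ) : ℂ)) := by
  refine ⟨[(-(a : ℂ) * Complex.I / 2, 1, 0), ((a : ℂ) * Complex.I / 2, -1, 0),
    (-(b : ℂ) * Complex.I / 2, 0, 1), ((b : ℂ) * Complex.I / 2, 0, -1)], ?_, ?_⟩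
  · intro t ht; fin_cases ht <;> simp [degOK]
  · intro θ φ
    simp only [evalL, tval, List.map_cons, List.map_nil, List.sum_cons, List.sum_nil]
    push_cast
    simp [Complex.exp_mul_I]
    rw [exp_neg_I', exp_neg_I']
    ring_nf
    simp [Complex.I_sq]

noncomputable def rval (u : ℝ × ℕ × ℕ × ℝ × ℝ) (θ φ : ℝ) : ℝ :=
  u.1 * Real.cos (u.2.1 * θ + u.2.2.2.1 * (u.2.2.1 * φ) + u.2.2.2.2)

noncomputable def convTerm (t : Term) : List (ℝ × ℕ × ℕ × ℝ × ℝ) :=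
  if 0 ≤ t.2.1 then
    [(t.1.re, t.2.1.natAbs, t.2.2.natAbs, if 0 ≤ t.2.2 then 1 else -1, 0),
     (t.1.im, t.2.1.natAbs, t.2.2.natAbs, if 0 ≤ t.2.2 then 1 else -1, π / 2)]
  else
    [(t.1.re, t.2.1.natAbs, t.2.2.natAbs, if 0 ≤ t.2.2 then -1 else 1, 0),
     (-t.1.im, t.2.1.natAbs, t.2.2.natAbs, if 0 ≤ t.2.2 then -1 else 1, π / 2)]

lemma convTerm_shape {n : ℕ} (t : Term) (ht : degOK n t) :
    ∀ u ∈ convTerm t, u.2.1 + u.2.2.1 ≤ n ∧ (u.2.2.2.1 = -1 ∨ u.2.2.2.1 = 1) ∧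
      (u.2.2.2.2 = 0 ∨ u.2.2.2.2 = π / 2) := by
  intro u hu
  unfold degOK at ht
  unfold convTerm at hu
  split_ifs at hu <;> simp at hu <;>
    rcases hu with rfl | rfl <;> simp [ht]

lemma tval_re (t : Term) (θ φ : ℝ) :
    (tval t θ φ).re =
      t.1.re * Real.cos ((t.2.1 : ℝ) * θ + (t.2.2 : ℝ) * φ) -
      t.1.im * Real.sin ((t.2.1 : ℝ) * θ + (t.2.2 : ℝ) * φ) := by
  unfold tval
  rw [Complex.exp_mul_I]
  simp only [Complex.mul_re, Complex.add_re, Complex.add_im, Complex.mul_im,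
    Complex.I_re, Complex.I_im, Complex.cos_ofReal_re, Complex.cos_ofReal_im,
    Complex.sin_ofReal_re, Complex.sin_ofReal_im]
  ring

lemma convTerm_eval (t : Term) (θ φ : ℝ) :
    (tval t θ φ).re = ((convTerm t).map (fun u => rval u θ φ)).sum := by
  rw [tval_re]
  obtain ⟨c, p, q⟩ := t
  simp only [convTerm]
  rcases le_or_gt 0 p with hp | hp <;> rcases le_or_gt 0 q with hq | hq
  · rw [if_pos hp, if_pos hq]
    have hp' : ((p.natAbs : ℝ)) = (p : ℝ) := by
      rw [Nat.cast_natAbs]; exact_mod_cast abs_of_nonneg hp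
    have hq' : ((q.natAbs : ℝ)) = (q : ℝ) := by
      rw [Nat.cast_natAbs]; exact_mod_cast abs_of_nonneg hq
    simp only [rval, List.map_cons, List.map_nil, List.sum_cons, List.sum_nil]
    rw [show ((p.natAbs : ℝ) * θ + (1:ℝ) * ((q.natAbs : ℝ) * φ) + 0 : ℝ)
        = (p : ℝ) * θ + (q : ℝ) * φ by rw [hp', hq']; ring,
      show ((p.natAbs : ℝ) * θ + (1:ℝ) * ((q.natAbs : ℝ) * φ) + π/2 : ℝ)
        = ((p : ℝ) * θ + (q : ℝ) * φ) + π/2 by rw [hp', hq']; ring,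
      Real.cos_add_pi_div_two]
    ring
  · rw [if_pos hp, if_neg (not_le.2 hq)]
    have hp' : ((p.natAbs : ℝ)) = (p : ℝ) := by
      rw [Nat.cast_natAbs]; exact_mod_cast abs_of_nonneg hp
    have hq' : ((q.natAbs : ℝ)) = -(q : ℝ) := by
      rw [Nat.cast_natAbs]; exact_mod_cast abs_of_nonpos hq.le
    simp only [rval, List.map_cons, List.map_nil, List.sum_cons, List.sum_nil]
    rw [show ((p.natAbs : ℝ) * θ + (-1:ℝ) * ((q.natAbs : ℝ) * φ) + 0 : ℝ)
        = (p : ℝ) * θ + (q : ℝ) * φ by rw [hp', hq']; ring,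
      show ((p.natAbs : ℝ) * θ + (-1:ℝ) * ((q.natAbs : ℝ) * φ) + π/2 : ℝ)
        = ((p : ℝ) * θ + (q : ℝ) * φ) + π/2 by rw [hp', hq']; ring,
      Real.cos_add_pi_div_two]
    ring
  · rw [if_neg (not_le.2 hp), if_pos hq]
    have hp' : ((p.natAbs : ℝ)) = -(p : ℝ) := by
      rw [Nat.cast_natAbs]; exact_mod_cast abs_of_nonpos hp.le
    have hq' : ((q.natAbs : ℝ)) = (q : ℝ) := by
      rw [Nat.cast_natAbs]; exact_mod_cast abs_of_nonneg hq
    simp only [rval, List.map_cons, List.map_nil, List.sum_cons, List.sum_nil]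
    rw [show ((p.natAbs : ℝ) * θ + (-1:ℝ) * ((q.natAbs : ℝ) * φ) + 0 : ℝ)
        = -((p : ℝ) * θ + (q : ℝ) * φ) by rw [hp', hq']; ring,
      show ((p.natAbs : ℝ) * θ + (-1:ℝ) * ((q.natAbs : ℝ) * φ) + π/2 : ℝ)
        = (-((p : ℝ) * θ + (q : ℝ) * φ)) + π/2 by rw [hp', hq']; ring,
      Real.cos_add_pi_div_two, Real.cos_neg, Real.sin_neg]
    ring
  · rw [if_neg (not_le.2 hp), if_neg (not_le.2 hq)]
    have hp' : ((p.natAbs : ℝ)) = -(p : ℝ) := by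
      rw [Nat.cast_natAbs]; exact_mod_cast abs_of_nonpos hp.le
    have hq' : ((q.natAbs : ℝ)) = -(q : ℝ) := by
      rw [Nat.cast_natAbs]; exact_mod_cast abs_of_nonpos hq.le
    simp only [rval, List.map_cons, List.map_nil, List.sum_cons, List.sum_nil]
    rw [show ((p.natAbs : ℝ) * θ + (1:ℝ) * ((q.natAbs : ℝ) * φ) + 0 : ℝ)
        = -((p : ℝ) * θ + (q : ℝ) * φ) by rw [hp', hq']; ring,
      show ((p.natAbs : ℝ) * θ + (1:ℝ) * ((q.natAbs : ℝ) * φ) + π/2 : ℝ)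
        = (-((p : ℝ) * θ + (q : ℝ) * φ)) + π/2 by rw [hp', hq']; ring,
      Real.cos_add_pi_div_two, Real.cos_neg, Real.sin_neg]
    ring

noncomputable def convL (L : List Term) : List (ℝ × ℕ × ℕ × ℝ × ℝ) :=
  L.flatMap convTerm

lemma convL_eval (L : List Term) (θ φ : ℝ) :
    (evalL L θ φ).re = ((convL L).map (fun u => rval u θ φ)).sum := by
  induction L with
  | nil => simp [evalL, convL]
  | cons t L ih =>
      simp only [evalL, convL, List.flatMap_cons, List.map_cons, List.sum_cons,
        List.map_append, List.sum_append, Complex.add_re] at *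
      rw [ih, convTerm_eval]

end KempeAux

/-- Kempe's trigonometric expansion of a monomial: substituting
`x = a cos θ + b cos φ`, `y = a sin θ + b sin φ` into `x^i * y^j` yields a
constant plus a finite linear combination of `cos (r θ + σ s φ + ψ)` with
`r + s ≤ i + j`, `σ ∈ {-1, 1}`, `ψ ∈ {0, π/2}`. -/
theorem kempe_monomial_expansion (a b : ℝ) (i j : ℕ) :
    ∃ (m : ℕ) (c₀ : ℝ) (c : Fin m → ℝ) (r s : Fin m → ℕ) (σ ψ : Fin m → ℝ),
      (∀ k : Fin m, r k + s k ≤ i + j ∧ (σ k = -1 ∨ σ k = 1) ∧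
        (ψ k = 0 ∨ ψ k = π / 2)) ∧
      ∀ θ φ : ℝ,
        (a * Real.cos θ + b * Real.cos φ) ^ i *
          (a * Real.sin θ + b * Real.sin φ) ^ j =
        c₀ + ∑ k : Fin m, c k * Real.cos (r k * θ + σ k * (s k * φ) + ψ k) := by
  classical
  obtain ⟨L, hL, hLe⟩ := ((KempeAux.rep_x a b).pow i).mul ((KempeAux.rep_y a b).pow j)
  have hLe' : ∀ θ φ : ℝ, ((a * Real.cos θ + b * Real.cos φ : ℝ) : ℂ) ^ i *
      ((a * Real.sin θ + b * Real.sin φ : ℝ) : ℂ) ^ j = KempeAux.evalL L θ φ := hLe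
  let M := KempeAux.convL L
  refine ⟨M.length, 0, fun k => (M.get k).1, fun k => (M.get k).2.1,
    fun k => (M.get k).2.2.1, fun k => (M.get k).2.2.2.1, fun k => (M.get k).2.2.2.2,
    ?_, ?_⟩
  · intro k
    have hmem : M.get k ∈ M := by
      rw [List.get_eq_getElem]; exact List.getElem_mem _
    have hmem' : M.get k ∈ KempeAux.convL L := hmem
    simp only [KempeAux.convL, List.mem_flatMap] at hmem'
    obtain ⟨t, htL, hu⟩ := hmem'
    exact KempeAux.convTerm_shape t (hL t htL) _ hu
  · intro θ φ
    have h1 : (a * Real.cos θ + b * Real.cos φ) ^ i *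
        (a * Real.sin θ + b * Real.sin φ) ^ j =
        (((a * Real.cos θ + b * Real.cos φ : ℝ) : ℂ) ^ i *
          ((a * Real.sin θ + b * Real.sin φ : ℝ) : ℂ) ^ j).re := by
      rw [← Complex.ofReal_pow, ← Complex.ofReal_pow, ← Complex.ofReal_mul,
        Complex.ofReal_re]
    rw [h1, hLe' θ φ, KempeAux.convL_eval, zero_add,
      ← Fin.sum_univ_fun_getElem (KempeAux.convL L) (fun u => KempeAux.rval u θ φ)]
    simp [KempeAux.rval, List.get_eq_getElem, M]
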